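/- Let T > 0, c > 0 and ε > 0, and let a, b, D : (-ε, ε) → ℝ be twice differentiable functions satisfying a(0) = 3, D(0) = D'(0) = D''(0) = 0, and, for all μ ∈ (-ε, ε), the two functional identities e^{-μT/c}·a(μ) = 2a(-μ) - b(-μ) - 3 and -e^{-μT/c} = -a(-μ) + b(-μ) - D(-μ) + 2. Then a'(0) = T/c, b'(0) = 0, and b''(0) = a''(0) - T²/c². -/

import Mathlib

/-- The computational core of the normal form of the Evans function near the
origin: the two functional identities coming from the symmetry
`(x,μ) ↦ (-x,-μ)` force `a'(0) = T/c`, `b'(0) = 0` and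
`b''(0) = a''(0) - T²/c²`. -/
theorem stmt_13 (T c ε : ℝ) (hT : 0 < T) (hc : 0 < c) (hε : 0 < ε)
    (a b D : ℝ → ℝ)
    (ha : ∀ μ ∈ Set.Ioo (-ε) ε, DifferentiableAt ℝ a μ ∧ DifferentiableAt ℝ (deriv a) μ)
    (hb : ∀ μ ∈ Set.Ioo (-ε) ε, DifferentiableAt ℝ b μ ∧ DifferentiableAt ℝ (deriv b) μ)
    (hD : ∀ μ ∈ Set.Ioo (-ε) ε, DifferentiableAt ℝ D μ ∧ DifferentiableAt ℝ (deriv D) μ)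
    (ha0 : a 0 = 3) (hD0 : D 0 = 0) (hD1 : deriv D 0 = 0) (hD2 : deriv (deriv D) 0 = 0)
    (hid1 : ∀ μ ∈ Set.Ioo (-ε) ε,
      Real.exp (-μ * T / c) * a μ = 2 * a (-μ) - b (-μ) - 3)
    (hid2 : ∀ μ ∈ Set.Ioo (-ε) ε,
      -Real.exp (-μ * T / c) = -a (-μ) + b (-μ) - D (-μ) + 2) :
    deriv a 0 = T / c ∧ deriv b 0 = 0 ∧
      deriv (deriv b) 0 = deriv (deriv a) 0 - T ^ 2 / c ^ 2 := by
  have h0 : (0:ℝ) ∈ Set.Ioo (-ε) ε := by constructor <;> simp [hε] <;> linarith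
  have hmem : Set.Ioo (-ε) ε ∈ nhds (0:ℝ) := (isOpen_Ioo).mem_nhds h0
  have hneg : ∀ μ : ℝ, μ ∈ Set.Ioo (-ε) ε → -μ ∈ Set.Ioo (-ε) ε := by
    intro μ hμ; obtain ⟨h1, h2⟩ := hμ; constructor <;> linarith
  -- HasDerivAt for exp(-μT/c)
  have Hexp : ∀ μ : ℝ, HasDerivAt (fun x => Real.exp (-x * T / c))
      (Real.exp (-μ * T / c) * (-1 * T / c)) μ := by
    intro μ
    exact (((hasDerivAt_neg μ).mul_const T).div_const c).exp
  -- HasDerivAt for composed-with-neg functions at μ ∈ S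
  have Hcomp : ∀ (f : ℝ → ℝ) (μ : ℝ), DifferentiableAt ℝ f (-μ) →
      HasDerivAt (fun x => f (-x)) (deriv f (-μ) * (-1)) μ := by
    intro f μ hf
    exact (hf.hasDerivAt).comp μ (hasDerivAt_neg μ)
  -- identity 2: eventual equality
  have e2 : (fun μ => -Real.exp (-μ * T / c)) =ᶠ[nhds (0:ℝ)]
      (fun μ => -a (-μ) + b (-μ) - D (-μ) + 2) :=
    Filter.eventually_of_mem hmem hid2
  -- deriv of RHS of identity 2 on S
  have Hg2 : ∀ μ ∈ Set.Ioo (-ε) ε,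
      HasDerivAt (fun x => -a (-x) + b (-x) - D (-x) + 2)
        (deriv a (-μ) - deriv b (-μ) + deriv D (-μ)) μ := by
    intro μ hμ
    have hA := Hcomp a μ (ha _ (hneg μ hμ)).1
    have hB := Hcomp b μ (hb _ (hneg μ hμ)).1
    have hDd := Hcomp D μ (hD _ (hneg μ hμ)).1
    have : HasDerivAt (fun x => -a (-x) + b (-x) - D (-x) + 2)
        (-(deriv a (-μ) * (-1)) + deriv b (-μ) * (-1) - deriv D (-μ) * (-1)) μ :=
      ((hA.neg.add hB).sub hDd).add_const 2
    convert this using 1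
    ring
  have dg2 : deriv (fun x => -a (-x) + b (-x) - D (-x) + 2) =ᶠ[nhds (0:ℝ)]
      (fun μ => deriv a (-μ) - deriv b (-μ) + deriv D (-μ)) :=
    Filter.eventually_of_mem hmem (fun μ hμ => (Hg2 μ hμ).deriv)
  have df2 : deriv (fun x => -Real.exp (-x * T / c)) =
      fun μ => Real.exp (-μ * T / c) * (T / c) := by
    funext μ
    have : HasDerivAt (fun x => -Real.exp (-x * T / c)) (-(Real.exp (-μ * T / c) * (-1 * T / c))) μ :=
      (Hexp μ).neg
    rw [this.deriv]; ring
  have d2 := e2.deriv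
  -- first derivative of id2 at 0
  have eq1 : T / c = deriv a 0 - deriv b 0 := by
    have h := d2.self_of_nhds
    rw [df2] at h
    have h' : deriv (fun x => -a (-x) + b (-x) - D (-x) + 2) 0
        = deriv a 0 - deriv b 0 + deriv D 0 := by
      have := (Hg2 0 h0).deriv
      simpa using this
    rw [h'] at h
    simp at h
    rw [hD1] at h
    linarith [h]
  -- second derivative of id2 at 0
  have eq2 : -(T / c) * (T / c) = -(deriv (deriv a) 0) + deriv (deriv b) 0 := by
    have key : deriv (deriv (fun x => -Real.exp (-x * T / c))) 0
        = deriv (deriv (fun x => -a (-x) + b (-x) - D (-x) + 2)) 0 := d2.deriv_eq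
    -- LHS
    have hL : deriv (deriv (fun x => -Real.exp (-x * T / c))) 0 = -(T/c) * (T/c) := by
      rw [df2]
      have : HasDerivAt (fun μ => Real.exp (-μ * T / c) * (T / c))
          ((Real.exp (-(0:ℝ) * T / c) * (-1 * T / c)) * (T / c)) 0 :=
        (Hexp 0).mul_const (T / c)
      rw [this.deriv]; simp; ring
    -- RHS
    have hR : deriv (deriv (fun x => -a (-x) + b (-x) - D (-x) + 2)) 0
        = -(deriv (deriv a) 0) + deriv (deriv b) 0 - deriv (deriv D) 0 := by
      rw [dg2.deriv_eq]
      have hA := Hcomp (deriv a) 0 (by simpa using (ha 0 h0).2)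
      have hB := Hcomp (deriv b) 0 (by simpa using (hb 0 h0).2)
      have hDd := Hcomp (deriv D) 0 (by simpa using (hD 0 h0).2)
      have : HasDerivAt (fun μ => deriv a (-μ) - deriv b (-μ) + deriv D (-μ))
          (deriv (deriv a) (-(0:ℝ)) * (-1) - deriv (deriv b) (-(0:ℝ)) * (-1)
            + deriv (deriv D) (-(0:ℝ)) * (-1)) 0 :=
        (hA.sub hB).add hDd
      rw [this.deriv]; simp; ring
    rw [hL, hR, hD2] at key
    linarith [key]
  -- identity 1 first derivative at 0
  have e1 : (fun μ => Real.exp (-μ * T / c) * a μ) =ᶠ[nhds (0:ℝ)]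
      (fun μ => 2 * a (-μ) - b (-μ) - 3) :=
    Filter.eventually_of_mem hmem hid1
  have eq3 : deriv a 0 - 3 * (T / c) = -2 * deriv a 0 + deriv b 0 := by
    have h := e1.deriv.self_of_nhds
    have hL : HasDerivAt (fun μ => Real.exp (-μ * T / c) * a μ)
        ((Real.exp (-(0:ℝ) * T / c) * (-1 * T / c)) * a 0
          + Real.exp (-(0:ℝ) * T / c) * deriv a 0) 0 :=
      (Hexp 0).mul ((ha 0 h0).1.hasDerivAt)
    have hA := Hcomp a 0 (by simpa using (ha 0 h0).1)
    have hB := Hcomp b 0 (by simpa using (hb 0 h0).1)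
    have hR : HasDerivAt (fun μ => 2 * a (-μ) - b (-μ) - 3)
        (2 * (deriv a (-(0:ℝ)) * (-1)) - deriv b (-(0:ℝ)) * (-1)) 0 :=
      ((hA.const_mul 2).sub hB).sub_const 3
    rw [hL.deriv, hR.deriv] at h
    simp [ha0] at h
    rw [neg_div] at h
    linarith [h]
  have hpow : T ^ 2 / c ^ 2 = (T / c) * (T / c) := by
    rw [div_mul_div_comm]; ring_nf
  refine ⟨by linarith, by linarith, by linarith⟩
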